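/- arXiv:2009.09735 — 9 statements merged into one kernel-verified Lean document; each statement's English description precedes it below -/
import Mathlib

section
/- Let F be a free group, H a finitely generated subgroup of F of rank n, f a nonidentity element of F, and m a positive integer such that f^m ∈ H. Then the subgroup K of F generated by H together with f has rank at most n. -/
set_option maxHeartbeats 1000000 in


theorem rank_sup_root_le {α : Type*} (H : Subgroup (FreeGroup α)) [Group.FG H]
    (n : ℕ) (hn : Group.rank H = n) (f : FreeGroup α) (hf : f ≠ 1)
    (m : ℕ) (hm : 0 < m) (hfm : f ^ m ∈ H)
    (K : Subgroup (FreeGroup α)) (hK : K = H ⊔ Subgroup.closure {f})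
    [Group.FG K] : Group.rank K ≤ n := by
  classical
  have hHK : H ≤ K := hK ▸ le_sup_left
  have hfK : f ∈ K := by
    rw [hK]
    exact SetLike.le_def.mp le_sup_right (Subgroup.subset_closure (Set.mem_singleton f))
  obtain ⟨S0, hS0card, hS0cl⟩ := Group.rank_spec (↥H)
  set S : Finset (FreeGroup α) := S0.image H.subtype with hSdef
  have hScl : Subgroup.closure (S : Set (FreeGroup α)) = H := by
    rw [hSdef, Finset.coe_image, ← MonoidHom.map_closure, hS0cl,
      ← MonoidHom.range_eq_map, H.range_subtype]
  -- K is a free group (Nielsen–Schreier)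
  set ι := IsFreeGroup.Generators ↥K with hιdef
  -- map K to the rational vector space `ι →₀ ℚ`, sending the free basis to the singles
  set χ : ↥K →* Multiplicative (ι →₀ ℚ) :=
    IsFreeGroup.lift (fun i : ι => Multiplicative.ofAdd (Finsupp.single i (1 : ℚ))) with hχdef
  set θ : FreeGroup α → (ι →₀ ℚ) :=
    fun g => if h : g ∈ K then Multiplicative.toAdd (χ ⟨g, h⟩) else 0 with hθdef
  have hθ : ∀ (x : FreeGroup α) (hx : x ∈ K), θ x = Multiplicative.toAdd (χ ⟨x, hx⟩) :=
    fun x hx => dif_pos hx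
  set W : Submodule ℚ (ι →₀ ℚ) :=
    Submodule.span ℚ ((S.image θ : Finset (ι →₀ ℚ)) : Set (ι →₀ ℚ)) with hWdef
  -- all images of elements of H lie in W
  have key : ∀ g (hg : g ∈ Subgroup.closure (S : Set (FreeGroup α))),
      ∀ (hgK : g ∈ K), Multiplicative.toAdd (χ ⟨g, hgK⟩) ∈ W := by
    intro g hg
    induction hg using Subgroup.closure_induction with
    | mem x hx =>
      intro hxK
      have hx' : θ x ∈ (S.image θ : Finset (ι →₀ ℚ)) :=
        Finset.mem_image_of_mem θ (Finset.mem_coe.mp hx)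
      have := Submodule.subset_span (R := ℚ) (Finset.mem_coe.mpr hx')
      rwa [hθ x hxK] at this
    | one =>
      intro h
      have h1 : (⟨1, h⟩ : ↥K) = 1 := rfl
      rw [h1, map_one]
      exact W.zero_mem
    | mul x y hx hy ihx ihy =>
      intro hxy
      have hxK : x ∈ K := hHK (hScl ▸ hx)
      have hyK : y ∈ K := hHK (hScl ▸ hy)
      have h1 : (⟨x * y, hxy⟩ : ↥K) = ⟨x, hxK⟩ * ⟨y, hyK⟩ := rfl
      rw [h1, map_mul, toAdd_mul]
      exact W.add_mem (ihx hxK) (ihy hyK)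
    | inv x hx ihx =>
      intro hxi
      have hxK : x ∈ K := hHK (hScl ▸ hx)
      have h1 : (⟨x⁻¹, hxi⟩ : ↥K) = (⟨x, hxK⟩ : ↥K)⁻¹ := rfl
      rw [h1, map_inv, toAdd_inv]
      exact W.neg_mem (ihx hxK)
  -- K is generated by S and f
  have hKcl : Subgroup.closure ((S : Set (FreeGroup α)) ∪ {f}) = K := by
    rw [Subgroup.closure_union, hScl, hK]
  -- all images of elements of K lie in W
  have key2 : ∀ g (hg : g ∈ Subgroup.closure ((S : Set (FreeGroup α)) ∪ {f})),
      ∀ (hgK : g ∈ K), Multiplicative.toAdd (χ ⟨g, hgK⟩) ∈ W := by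
    intro g hg
    induction hg using Subgroup.closure_induction with
    | mem x hx =>
      rcases hx with hx | hx
      · intro hxK
        have hx' : θ x ∈ (S.image θ : Finset (ι →₀ ℚ)) :=
          Finset.mem_image_of_mem θ (Finset.mem_coe.mp hx)
        have := Submodule.subset_span (R := ℚ) (Finset.mem_coe.mpr hx')
        rwa [hθ x hxK] at this
      · have hxf : x = f := Set.mem_singleton_iff.mp hx
        subst hxf
        intro hfK'
        have hfmK : x ^ m ∈ K := hHK hfm
        have h1 : Multiplicative.toAdd (χ ⟨x ^ m, hfmK⟩) ∈ W := by
          apply key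
          rw [hScl]; exact hfm
        have h2 : (⟨x ^ m, hfmK⟩ : ↥K) = (⟨x, hfK'⟩ : ↥K) ^ m := rfl
        rw [h2, map_pow, toAdd_pow] at h1
        have h3 := W.smul_mem ((m : ℚ)⁻¹) h1
        have hm0 : (m : ℚ) ≠ 0 := Nat.cast_ne_zero.mpr hm.ne'
        rwa [← Nat.cast_smul_eq_nsmul ℚ, inv_smul_smul₀ hm0] at h3
    | one =>
      intro h
      have h1 : (⟨1, h⟩ : ↥K) = 1 := rfl
      rw [h1, map_one]
      exact W.zero_mem
    | mul x y hx hy ihx ihy =>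
      intro hxy
      have hxK : x ∈ K := hKcl ▸ hx
      have hyK : y ∈ K := hKcl ▸ hy
      have h1 : (⟨x * y, hxy⟩ : ↥K) = ⟨x, hxK⟩ * ⟨y, hyK⟩ := rfl
      rw [h1, map_mul, toAdd_mul]
      exact W.add_mem (ihx hxK) (ihy hyK)
    | inv x hx ihx =>
      intro hxi
      have hxK : x ∈ K := hKcl ▸ hx
      have h1 : (⟨x⁻¹, hxi⟩ : ↥K) = (⟨x, hxK⟩ : ↥K)⁻¹ := rfl
      rw [h1, map_inv, toAdd_inv]
      exact W.neg_mem (ihx hxK)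
  have key2' : ∀ k : ↥K, Multiplicative.toAdd (χ k) ∈ W := by
    rintro ⟨g, hg⟩
    exact key2 g (hKcl ▸ hg) hg
  -- hence W is everything
  have hW : W = ⊤ := by
    rw [eq_top_iff, ← (Finsupp.basisSingleOne (ι := ι) (R := ℚ)).span_eq]
    apply Submodule.span_le.mpr
    rintro _ ⟨i, rfl⟩
    have h1 : (Finsupp.basisSingleOne (ι := ι) (R := ℚ)) i
        = Multiplicative.toAdd (χ (IsFreeGroup.of i)) := by
      rw [hχdef, IsFreeGroup.lift_of, toAdd_ofAdd, Finsupp.coe_basisSingleOne]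
    rw [h1]
    exact key2' _
  -- so `ι →₀ ℚ` is finite dimensional, spanned by at most n vectors
  have htopfg : (⊤ : Submodule ℚ (ι →₀ ℚ)).FG := by
    rw [← hW, hWdef]
    exact Submodule.fg_span (Finset.finite_toSet _)
  have hfin : Module.Finite ℚ (ι →₀ ℚ) := Module.finite_def.mpr htopfg
  have hιfin : Finite ι := Module.Finite.finite_basis (Finsupp.basisSingleOne (ι := ι) (R := ℚ))
  have : Fintype ι := Fintype.ofFinite ι
  have h1 : Module.finrank ℚ (ι →₀ ℚ) = Fintype.card ι :=
    Module.finrank_eq_card_basis Finsupp.basisSingleOne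
  have h2 : Module.finrank ℚ (ι →₀ ℚ) ≤ (S.image θ).card := by
    have h3 := finrank_span_finset_le_card (R := ℚ) (S.image θ)
    rw [Set.finrank] at h3
    rw [← finrank_top ℚ (ι →₀ ℚ), ← hW, hWdef]
    exact h3
  have hcard : Fintype.card ι ≤ n := by
    calc Fintype.card ι = Module.finrank ℚ (ι →₀ ℚ) := h1.symm
      _ ≤ (S.image θ).card := h2
      _ ≤ S.card := Finset.card_image_le
      _ ≤ S0.card := Finset.card_image_le
      _ = n := by rw [hS0card, hn]
  -- the free basis of K generates it
  have hgen : Subgroup.closure (Set.range (IsFreeGroup.of : ι → ↥K)) = ⊤ := by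
    have hof : Set.range (IsFreeGroup.of : ι → ↥K)
        = ⇑(IsFreeGroup.mulEquiv ↥K).toMonoidHom '' Set.range FreeGroup.of := by
      rw [← Set.range_comp]; rfl
    rw [hof, ← MonoidHom.map_closure, FreeGroup.closure_range_of,
      Subgroup.map_top_of_surjective _ (IsFreeGroup.mulEquiv ↥K).surjective]
  have hrank : Group.rank ↥K ≤ (Finset.univ.image (IsFreeGroup.of : ι → ↥K)).card := by
    apply Group.rank_le
    rw [Finset.coe_image, Finset.coe_univ, Set.image_univ, hgen]
  calc Group.rank ↥K ≤ (Finset.univ.image (IsFreeGroup.of : ι → ↥K)).card := hrank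
    _ ≤ Finset.univ.card := Finset.card_image_le
    _ = Fintype.card ι := Finset.card_univ
    _ ≤ n := hcard
end

section
/- Every free group of finite rank is Hopfian: every surjective endomorphism of a finitely generated free group is injective. -/
namespace FGHopf
open FreeGroup

variable {α : Type*} [DecidableEq α]

def pP (L : List (α × Bool)) (a : α) (x : Fin (L.length + 1)) : Prop :=
  (x.val < L.length ∧ L[L.length - 1 - x.val]? = some (a, true)) ∨
  (0 < x.val ∧ L[L.length - x.val]? = some (a, false))

def qP (L : List (α × Bool)) (a : α) (y : Fin (L.length + 1)) : Prop :=
  (0 < y.val ∧ L[L.length - y.val]? = some (a, true)) ∨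
  (y.val < L.length ∧ L[L.length - 1 - y.val]? = some (a, false))

lemma not_adj {L : List (α × Bool)} (hred : reduce L = L) {k : ℕ} {a : α} {b : Bool}
    (h1 : L[k]? = some (a, b)) (h2 : L[k + 1]? = some (a, !b)) : False := by
  obtain ⟨hk1, h1⟩ := List.getElem?_eq_some_iff.mp h1
  obtain ⟨hk2, h2⟩ := List.getElem?_eq_some_iff.mp h2
  apply reduce.not (L₁ := L) (L₂ := L.take k) (L₃ := L.drop (k + 2)) (x := a) (b := b)
  rw [hred]
  conv_lhs => rw [← List.take_append_drop k L]
  congr 1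
  rw [List.drop_eq_getElem_cons hk1, List.drop_eq_getElem_cons hk2, h1, h2]

omit [DecidableEq α] in
lemma len_pos_of_getElem? {L : List (α × Bool)} {k : ℕ} {c : α × Bool}
    (h : L[k]? = some c) : k < L.length := (List.getElem?_eq_some_iff.mp h).1

open Classical in
/-- The partial injection for generator `a`, as an equivalence of subtypes. -/
noncomputable def eqv (L : List (α × Bool)) (a : α) (hred : reduce L = L) :
    {x : Fin (L.length + 1) // pP L a x} ≃ {y : Fin (L.length + 1) // qP L a y} where
  toFun x :=
    if h : x.1.val < L.length ∧ L[L.length - 1 - x.1.val]? = some (a, true) then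
      ⟨⟨x.1.val + 1, by omega⟩, Or.inl ⟨by show 0 < x.1.val + 1; omega, by
        show L[L.length - (x.1.val + 1)]? = _
        rw [show L.length - (x.1.val + 1) = L.length - 1 - x.1.val by omega]; exact h.2⟩⟩
    else
      have h2 := x.2.resolve_left h
      ⟨⟨x.1.val - 1, by have := x.1.isLt; omega⟩, Or.inr ⟨by
        show x.1.val - 1 < L.length
        have := len_pos_of_getElem? h2.2; have := x.1.isLt; omega, by
        show L[L.length - 1 - (x.1.val - 1)]? = _
        rw [show L.length - 1 - (x.1.val - 1) = L.length - x.1.val by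
          have := h2.1; have := x.1.isLt; omega]; exact h2.2⟩⟩
  invFun y :=
    if h : 0 < y.1.val ∧ L[L.length - y.1.val]? = some (a, true) then
      ⟨⟨y.1.val - 1, by have := y.1.isLt; omega⟩, Or.inl ⟨by
        show y.1.val - 1 < L.length
        have := len_pos_of_getElem? h.2; have := y.1.isLt; omega, by
        show L[L.length - 1 - (y.1.val - 1)]? = _
        rw [show L.length - 1 - (y.1.val - 1) = L.length - y.1.val by
          have := h.1; have := y.1.isLt; omega]; exact h.2⟩⟩
    else
      have h2 := y.2.resolve_left h
      ⟨⟨y.1.val + 1, by omega⟩, Or.inr ⟨by show 0 < y.1.val + 1; omega, by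
        show L[L.length - (y.1.val + 1)]? = _
        rw [show L.length - (y.1.val + 1) = L.length - 1 - y.1.val by omega]; exact h2.2⟩⟩
  left_inv x := by
    dsimp only
    by_cases h : x.1.val < L.length ∧ L[L.length - 1 - x.1.val]? = some (a, true)
    · rw [dif_pos h]
      rw [dif_pos (show 0 < (⟨x.1.val + 1, by omega⟩ : Fin (L.length + 1)).val ∧
          L[L.length - (⟨x.1.val + 1, by omega⟩ : Fin (L.length + 1)).val]? = some (a, true) by
        refine ⟨Nat.succ_pos _, ?_⟩
        show L[L.length - (x.1.val + 1)]? = _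
        rw [show L.length - (x.1.val + 1) = L.length - 1 - x.1.val by omega]; exact h.2)]
      exact Subtype.ext (Fin.ext (show x.1.val + 1 - 1 = x.1.val by omega))
    · rw [dif_neg h]
      have h2 := x.2.resolve_left h
      rw [dif_neg (show ¬(0 < (⟨x.1.val - 1, by have := x.1.isLt; omega⟩ : Fin (L.length + 1)).val ∧
          L[L.length - (⟨x.1.val - 1, by have := x.1.isLt; omega⟩ :
            Fin (L.length + 1)).val]? = some (a, true)) by
        rintro ⟨hy1, hy2⟩
        replace hy1 : 0 < x.1.val - 1 := hy1
        replace hy2 : L[L.length - (x.1.val - 1)]? = some (a, true) := hy2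
        refine not_adj hred (k := L.length - x.1.val) h2.2 ?_
        rw [show L.length - x.1.val + 1 = L.length - (x.1.val - 1) by
          have := h2.1; have := x.1.isLt; omega]
        exact hy2)]
      exact Subtype.ext (Fin.ext (show x.1.val - 1 + 1 = x.1.val by have := h2.1; omega))
  right_inv y := by
    dsimp only
    by_cases h : 0 < y.1.val ∧ L[L.length - y.1.val]? = some (a, true)
    · rw [dif_pos h]
      rw [dif_pos (show (⟨y.1.val - 1, by have := y.1.isLt; omega⟩ :
            Fin (L.length + 1)).val < L.length ∧
          L[L.length - 1 - (⟨y.1.val - 1, by have := y.1.isLt; omega⟩ :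
            Fin (L.length + 1)).val]? = some (a, true) by
        refine ⟨show y.1.val - 1 < L.length from by
          have := len_pos_of_getElem? h.2; have := y.1.isLt; omega, ?_⟩
        show L[L.length - 1 - (y.1.val - 1)]? = _
        rw [show L.length - 1 - (y.1.val - 1) = L.length - y.1.val by
          have := h.1; have := y.1.isLt; omega]
        exact h.2)]
      exact Subtype.ext (Fin.ext (show y.1.val - 1 + 1 = y.1.val by have := h.1; omega))
    · rw [dif_neg h]
      have h2 := y.2.resolve_left h
      rw [dif_neg (show ¬((⟨y.1.val + 1, by omega⟩ : Fin (L.length + 1)).val < L.length ∧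
          L[L.length - 1 - (⟨y.1.val + 1, by omega⟩ :
            Fin (L.length + 1)).val]? = some (a, true)) by
        rintro ⟨hx1, hx2⟩
        replace hx1 : y.1.val + 1 < L.length := hx1
        replace hx2 : L[L.length - 1 - (y.1.val + 1)]? = some (a, true) := hx2
        refine not_adj hred (k := L.length - 1 - (y.1.val + 1)) hx2 ?_
        rw [show L.length - 1 - (y.1.val + 1) + 1 = L.length - 1 - y.1.val by omega]
        exact h2.2)]
      exact Subtype.ext (Fin.ext (show y.1.val + 1 - 1 = y.1.val by omega))

open Classical in
/-- The permutation attached to a generator. -/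
noncomputable def sig (L : List (α × Bool)) (a : α) (hred : reduce L = L) :
    Equiv.Perm (Fin (L.length + 1)) :=
  (eqv L a hred).extendSubtype

lemma sig_apply_true {L : List (α × Bool)} {a : α} (hred : reduce L = L) {k : ℕ}
    (hk : k < L.length) (h : L[k]? = some (a, true)) :
    sig L a hred ⟨L.length - 1 - k, by omega⟩ = ⟨L.length - k, by omega⟩ := by
  classical
  have hx : pP L a ⟨L.length - 1 - k, by omega⟩ :=
    Or.inl ⟨show L.length - 1 - k < L.length by omega, by
      show L[L.length - 1 - (L.length - 1 - k)]? = _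
      rw [show L.length - 1 - (L.length - 1 - k) = k by omega]; exact h⟩
  rw [sig, Equiv.extendSubtype_apply_of_mem _ _ hx]
  have heq : eqv L a hred ⟨⟨L.length - 1 - k, by omega⟩, hx⟩ =
      ⟨⟨L.length - k, by omega⟩,
        Or.inl ⟨show 0 < L.length - k by omega, by
          show L[L.length - (L.length - k)]? = _
          rw [show L.length - (L.length - k) = k by omega]; exact h⟩⟩ := by
    rw [eqv]
    dsimp only [Equiv.coe_fn_mk]
    rw [dif_pos (show (⟨L.length - 1 - k, by omega⟩ : Fin (L.length + 1)).val < L.length ∧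
        L[L.length - 1 - (⟨L.length - 1 - k, by omega⟩ :
          Fin (L.length + 1)).val]? = some (a, true) from hx.resolve_right (by
        rintro ⟨h1, h2⟩
        replace h1 : 0 < L.length - 1 - k := h1
        replace h2 : L[L.length - (L.length - 1 - k)]? = some (a, false) := h2
        rw [show L.length - (L.length - 1 - k) = k + 1 by omega] at h2
        exact not_adj hred h h2))]
    exact Subtype.ext (Fin.ext (show L.length - 1 - k + 1 = L.length - k by omega))
  rw [heq]

lemma sig_apply_false {L : List (α × Bool)} {a : α} (hred : reduce L = L) {k : ℕ}
    (hk : k < L.length) (h : L[k]? = some (a, false)) :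
    sig L a hred ⟨L.length - k, by omega⟩ = ⟨L.length - 1 - k, by omega⟩ := by
  classical
  have hx : pP L a ⟨L.length - k, by omega⟩ :=
    Or.inr ⟨show 0 < L.length - k by omega, by
      show L[L.length - (L.length - k)]? = _
      rw [show L.length - (L.length - k) = k by omega]; exact h⟩
  rw [sig, Equiv.extendSubtype_apply_of_mem _ _ hx]
  have heq : eqv L a hred ⟨⟨L.length - k, by omega⟩, hx⟩ =
      ⟨⟨L.length - 1 - k, by omega⟩,
        Or.inr ⟨show L.length - 1 - k < L.length by omega, by
          show L[L.length - 1 - (L.length - 1 - k)]? = _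
          rw [show L.length - 1 - (L.length - 1 - k) = k by omega]; exact h⟩⟩ := by
    rw [eqv]
    dsimp only [Equiv.coe_fn_mk]
    rw [dif_neg (show ¬((⟨L.length - k, by omega⟩ : Fin (L.length + 1)).val < L.length ∧
        L[L.length - 1 - (⟨L.length - k, by omega⟩ :
          Fin (L.length + 1)).val]? = some (a, true)) by
      rintro ⟨h1, h2⟩
      replace h1 : L.length - k < L.length := h1
      replace h2 : L[L.length - 1 - (L.length - k)]? = some (a, true) := h2
      have hk0 : 0 < k := by omega
      rw [show L.length - 1 - (L.length - k) = k - 1 by omega] at h2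
      refine not_adj hred (k := k - 1) h2 ?_
      rw [show k - 1 + 1 = k by omega]
      exact h)]
    exact Subtype.ext (Fin.ext (show L.length - k - 1 = L.length - 1 - k by omega))
  rw [heq]

end FGHopf
namespace FGHopf
open FreeGroup

variable {α : Type*} [DecidableEq α]

lemma prod_apply (L : List (α × Bool)) (hred : reduce L = L) (d : ℕ) (hd : d ≤ L.length) :
    (((L.drop (L.length - d)).map
        fun x => cond x.2 (sig L x.1 hred) (sig L x.1 hred)⁻¹).prod)
      ⟨0, Nat.succ_pos _⟩ = ⟨d, Nat.lt_succ_of_le hd⟩ := by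
  induction d with
  | zero => simp
  | succ d ih =>
    have hi : L.length - (d + 1) < L.length := by omega
    rw [List.drop_eq_getElem_cons hi, List.map_cons, List.prod_cons, Equiv.Perm.mul_apply,
      show L.length - (d + 1) + 1 = L.length - d by omega, ih (by omega)]
    rcases hL : L[L.length - (d + 1)] with ⟨a, b⟩
    have hL? : L[L.length - (d + 1)]? = some (a, b) := by
      rw [List.getElem?_eq_getElem hi, hL]
    have e1 : (⟨L.length - 1 - (L.length - (d + 1)), by omega⟩ : Fin (L.length + 1)) =
        ⟨d, by omega⟩ :=
      Fin.ext (show L.length - 1 - (L.length - (d + 1)) = d by omega)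
    have e2 : (⟨L.length - (L.length - (d + 1)), by omega⟩ : Fin (L.length + 1)) =
        ⟨d + 1, by omega⟩ :=
      Fin.ext (show L.length - (L.length - (d + 1)) = d + 1 by omega)
    cases b with
    | true =>
      have h3 := sig_apply_true hred hi hL?
      rw [e1, e2] at h3
      dsimp only [cond_true]
      exact h3
    | false =>
      have h3 := sig_apply_false hred hi hL?
      rw [e1, e2] at h3
      dsimp only [cond_false]
      rw [Equiv.Perm.inv_def, Equiv.symm_apply_eq]
      exact h3.symm

lemma resfin (w : FreeGroup α) (hw : w ≠ 1) :
    ∃ (m : ℕ) (ψ : FreeGroup α →* Equiv.Perm (Fin m)), ψ w ≠ 1 := by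
  set L := w.toWord with hL
  have hred : reduce L = L := reduce_toWord w
  refine ⟨L.length + 1, FreeGroup.lift (fun a => sig L a hred), ?_⟩
  have h1 : FreeGroup.lift (fun a => sig L a hred) w =
      (L.map fun x => cond x.2 (sig L x.1 hred) (sig L x.1 hred)⁻¹).prod := by
    conv_lhs => rw [← mk_toWord (x := w)]
    exact lift_mk
  have h2 := prod_apply L hred L.length le_rfl
  rw [Nat.sub_self, List.drop_zero, ← h1] at h2
  intro hc
  rw [hc] at h2
  have hn : L.length ≠ 0 := by
    intro h0
    exact hw (toWord_eq_nil_iff.mp (List.length_eq_zero_iff.mp h0))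
  simp only [Equiv.Perm.coe_one, id_eq, Fin.mk.injEq] at h2
  exact hn h2.symm

end FGHopf

theorem freeGroup_hopfian {α : Type*} [Finite α]
    (φ : FreeGroup α →* FreeGroup α) (hφ : Function.Surjective φ) :
    Function.Injective φ := by
  classical
  rw [injective_iff_map_eq_one]
  intro w hw
  by_contra hne
  obtain ⟨m, ψ, hψ⟩ := FGHopf.resfin w hne
  have hfin : Finite (FreeGroup α →* Equiv.Perm (Fin m)) := by
    refine Finite.of_injective (fun f => (f ∘ FreeGroup.of : α → Equiv.Perm (Fin m))) ?_
    intro f g h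
    exact FreeGroup.ext_hom f g fun a => congrFun h a
  have hinj : Function.Injective
      (fun τ : FreeGroup α →* Equiv.Perm (Fin m) => τ.comp φ) := by
    intro τ₁ τ₂ h
    refine MonoidHom.ext fun x => ?_
    obtain ⟨y, rfl⟩ := hφ x
    exact DFunLike.congr_fun h y
  obtain ⟨τ, hτ⟩ := Finite.injective_iff_surjective.mp hinj ψ
  apply hψ
  rw [← hτ]
  simp [hw]
end

section
/- If U is a free group of rank n+1 and there exists a surjective homomorphism τ : U → K onto a free group K of finite rank such that the kernel of τ is nontrivial, then the rank of K is strictly less than n+1. -/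
open FreeGroup List

namespace RankLtAux

section Core

variable {α : Type*} [DecidableEq α]

/-- A word has no adjacent inverse pair. -/
def NoInv (r : List (α × Bool)) : Prop :=
  ∀ (L₂ L₃ : List (α × Bool)) (x : α) (b : Bool), r ≠ L₂ ++ (x, b) :: (x, !b) :: L₃

lemma noInv_of_reduce {r : List (α × Bool)} (h : FreeGroup.reduce r = r) : NoInv r := by
  intro L₂ L₃ x b hr
  exact FreeGroup.reduce.not (h.trans hr)

lemma noInv_get {r : List (α × Bool)} (h : NoInv r) {k : ℕ} {x : α} {b : Bool}
    (h1 : r[k]? = some (x, b)) (h2 : r[k+1]? = some (x, !b)) : False := by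
  obtain ⟨hk1, h1⟩ := List.getElem?_eq_some_iff.mp h1
  obtain ⟨hk2, h2⟩ := List.getElem?_eq_some_iff.mp h2
  apply h (r.take k) (r.drop (k+2)) x b
  conv_lhs => rw [← List.take_append_drop k r]
  rw [List.drop_eq_getElem_cons hk1, List.drop_eq_getElem_cons hk2, h1, h2]

variable (r : List (α × Bool))

/-- Source set for the partial shift associated to generator `a`. -/
def src (a : α) (j : Fin (r.length + 1)) : Prop :=
  r[(j : ℕ)]? = some (a, false) ∨ (0 < (j : ℕ) ∧ r[(j : ℕ) - 1]? = some (a, true))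

/-- Target set for the partial shift associated to generator `a`. -/
def tgt (a : α) (j : Fin (r.length + 1)) : Prop :=
  r[(j : ℕ)]? = some (a, true) ∨ (0 < (j : ℕ) ∧ r[(j : ℕ) - 1]? = some (a, false))

instance (a : α) : DecidablePred (src r a) := fun j => by unfold src; infer_instance
instance (a : α) : DecidablePred (tgt r a) := fun j => by unfold tgt; infer_instance

/-- forward partial shift -/
def fwd (a : α) (j : Fin (r.length + 1)) : Fin (r.length + 1) :=
  if h : r[(j : ℕ)]? = some (a, false) then
    ⟨(j : ℕ) + 1, by
      obtain ⟨hk, -⟩ := List.getElem?_eq_some_iff.mp h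
      omega⟩
  else ⟨(j : ℕ) - 1, by omega⟩

/-- backward partial shift -/
def bwd (a : α) (j : Fin (r.length + 1)) : Fin (r.length + 1) :=
  if h : r[(j : ℕ)]? = some (a, true) then
    ⟨(j : ℕ) + 1, by
      obtain ⟨hk, -⟩ := List.getElem?_eq_some_iff.mp h
      omega⟩
  else ⟨(j : ℕ) - 1, by omega⟩

variable {r} (hr : NoInv r)
include hr

lemma fwd_src {a : α} {j : Fin (r.length + 1)} (hj : src r a j) : tgt r a (fwd r a j) := by
  rcases hj with h | ⟨h0, h1⟩
  · rw [fwd, dif_pos h]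
    exact Or.inr ⟨Nat.succ_pos _, by simpa using h⟩
  · have hne : ¬ r[(j : ℕ)]? = some (a, false) := by
      intro hc
      have := noInv_get hr (b := true) (k := (j : ℕ) - 1) h1 (by simpa [Nat.sub_add_cancel h0] using hc)
      exact this
    rw [fwd, dif_neg hne]
    exact Or.inl h1

lemma bwd_tgt {a : α} {j : Fin (r.length + 1)} (hj : tgt r a j) : src r a (bwd r a j) := by
  rcases hj with h | ⟨h0, h1⟩
  · rw [bwd, dif_pos h]
    exact Or.inr ⟨Nat.succ_pos _, by simpa using h⟩
  · have hne : ¬ r[(j : ℕ)]? = some (a, true) := by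
      intro hc
      have := noInv_get hr (b := false) (k := (j : ℕ) - 1) h1 (by simpa [Nat.sub_add_cancel h0] using hc)
      exact this
    rw [bwd, dif_neg hne]
    exact Or.inl h1

lemma bwd_fwd {a : α} {j : Fin (r.length + 1)} (hj : src r a j) : bwd r a (fwd r a j) = j := by
  rcases hj with h | ⟨h0, h1⟩
  · rw [fwd, dif_pos h]
    have hne : ¬ r[((j : ℕ) + 1)]? = some (a, true) := by
      intro hc
      exact noInv_get hr (b := false) (k := (j : ℕ)) h hc
    rw [bwd]
    simp only [hne, dif_neg, not_false_iff]
    ext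
    simp
  · have hne : ¬ r[(j : ℕ)]? = some (a, false) := by
      intro hc
      exact noInv_get hr (b := true) (k := (j : ℕ) - 1) h1 (by simpa [Nat.sub_add_cancel h0] using hc)
    rw [fwd, dif_neg hne, bwd]
    have h1' : r[((j : ℕ) - 1)]? = some (a, true) := h1
    simp only [h1', dif_pos]
    ext
    simp [Nat.sub_add_cancel h0]

lemma fwd_bwd {a : α} {j : Fin (r.length + 1)} (hj : tgt r a j) : fwd r a (bwd r a j) = j := by
  rcases hj with h | ⟨h0, h1⟩
  · rw [bwd, dif_pos h]
    have hne : ¬ r[((j : ℕ) + 1)]? = some (a, false) := by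
      intro hc
      exact noInv_get hr (b := true) (k := (j : ℕ)) h hc
    rw [fwd]
    simp only [hne, dif_neg, not_false_iff]
    ext
    simp
  · have hne : ¬ r[(j : ℕ)]? = some (a, true) := by
      intro hc
      exact noInv_get hr (b := false) (k := (j : ℕ) - 1) h1 (by simpa [Nat.sub_add_cancel h0] using hc)
    rw [bwd, dif_neg hne, fwd]
    have h1' : r[((j : ℕ) - 1)]? = some (a, false) := h1
    simp only [h1', dif_pos]
    ext
    simp [Nat.sub_add_cancel h0]

/-- The permutation associated to a generator. -/
noncomputable def perm (a : α) : Equiv.Perm (Fin (r.length + 1)) :=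
  Equiv.extendSubtype
    { toFun := fun j => ⟨fwd r a j, fwd_src hr j.2⟩
      invFun := fun j => ⟨bwd r a j, bwd_tgt hr j.2⟩
      left_inv := fun j => Subtype.ext (bwd_fwd hr j.2)
      right_inv := fun j => Subtype.ext (fwd_bwd hr j.2) }

lemma perm_apply_of_src {a : α} {j : Fin (r.length + 1)} (hj : src r a j) :
    perm hr a j = fwd r a j := by
  rw [perm, Equiv.extendSubtype_apply_of_mem _ j hj]
  rfl

lemma step {k : ℕ} {x : α × Bool} (h : r[k]? = some x)
    (hk : k + 1 < r.length + 1) (hk' : k < r.length + 1) :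
    (cond x.2 (perm hr x.1) (perm hr x.1)⁻¹) ⟨k + 1, hk⟩ = ⟨k, hk'⟩ := by
  obtain ⟨a, b⟩ := x
  cases b
  · -- letter (a, false) : permutation is (perm a)⁻¹, and perm a k = k+1
    have hsrc : src r a ⟨k, hk'⟩ := Or.inl h
    have hval : perm hr a ⟨k, hk'⟩ = ⟨k + 1, hk⟩ := by
      rw [perm_apply_of_src hr hsrc, fwd, dif_pos h]
    simp only [cond_false]
    rw [← hval, Equiv.Perm.inv_def, Equiv.symm_apply_apply]
  · -- letter (a, true) : perm a (k+1) = k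
    have hsrc : src r a ⟨k + 1, hk⟩ := Or.inr ⟨Nat.succ_pos _, by simpa using h⟩
    simp only [cond_true]
    rw [perm_apply_of_src hr hsrc, fwd]
    have hne : ¬ r[k + 1]? = some (a, false) := by
      intro hc
      exact noInv_get hr (b := true) h hc
    simp only [hne, dif_neg, not_false_iff]
    exact Fin.ext (by simp)

lemma suffix_prod : ∀ (t : List (α × Bool)) (k : ℕ), r.drop k = t → k + t.length = r.length →
    ∀ (hk : k < r.length + 1),
    (t.map fun x => cond x.2 (perm hr x.1) (perm hr x.1)⁻¹).prod
      ⟨r.length, Nat.lt_succ_self _⟩ = ⟨k, hk⟩ := by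
  intro t
  induction t with
  | nil =>
    intro k _ hlen _
    simp only [List.length_nil, Nat.add_zero] at hlen
    subst hlen
    simp
  | cons x t ih =>
    intro k hdrop hlen hkbound
    have hklt : k < r.length := by simp at hlen; omega
    have hget : r[k]? = some x := by
      have : (r.drop k)[0]? = some x := by rw [hdrop]; simp
      simpa using this
    have hdrop' : r.drop (k + 1) = t := by
      have : (r.drop k).drop 1 = r.drop (k + 1) := by
        rw [List.drop_drop]
      rw [← this, hdrop]
      rfl
    have hlen' : (k + 1) + t.length = r.length := by simp at hlen ⊢; omega
    have iht := ih (k + 1) hdrop' hlen' (by omega)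
    simp only [List.map_cons, List.prod_cons, Equiv.Perm.mul_apply]
    rw [iht]
    exact step hr hget (by omega) (by omega)

end Core

lemma residually_finite {α : Type*} [DecidableEq α] {w : FreeGroup α} (hw : w ≠ 1) :
    ∃ (m : ℕ) (π : FreeGroup α →* Equiv.Perm (Fin m)), π w ≠ 1 := by
  set r := w.toWord with hrdef
  have hred : FreeGroup.reduce r = r := FreeGroup.reduce_toWord w
  have hnil : r ≠ [] := by
    simpa [hrdef, FreeGroup.toWord_eq_nil_iff] using hw
  have hr : NoInv r := noInv_of_reduce hred
  refine ⟨r.length + 1, FreeGroup.lift (fun a => perm hr a), ?_⟩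
  have hmk : w = FreeGroup.mk r := (FreeGroup.mk_toWord).symm
  rw [hmk, FreeGroup.lift_mk]
  intro hone
  have hzero := suffix_prod hr r 0 rfl (by simp) (by omega)
  rw [hone] at hzero
  have : r.length = 0 := by
    have := congrArg Fin.val hzero
    simpa using this
  exact hnil (List.length_eq_zero_iff.mp this)

/-- Free groups of finite rank are Hopfian. -/
lemma hopfian {n : ℕ} (φ : FreeGroup (Fin n) →* FreeGroup (Fin n))
    (hφ : Function.Surjective φ) : φ.ker = ⊥ := by
  by_contra hker
  obtain ⟨⟨w, hwker⟩, hw1⟩ := Subgroup.ne_bot_iff_exists_ne_one.mp hker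
  have hwne : w ≠ 1 := by
    simpa [Subtype.ext_iff] using hw1
  obtain ⟨m, π, hπ⟩ := residually_finite hwne
  have hfin : Finite (FreeGroup (Fin n) →* Equiv.Perm (Fin m)) :=
    Finite.of_equiv _ FreeGroup.lift
  have hinj : Function.Injective
      (fun ψ : FreeGroup (Fin n) →* Equiv.Perm (Fin m) => ψ.comp φ) := by
    intro ψ₁ ψ₂ h
    exact (MonoidHom.cancel_right hφ).mp h
  have hsurj := (Finite.injective_iff_surjective).mp hinj
  obtain ⟨ψ, hψ⟩ := hsurj π
  apply hπ
  have : ψ (φ w) = π w := by rw [← hψ]; rfl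
  rw [← this, show φ w = 1 from hwker]
  exact map_one ψ

lemma card_le {n : ℕ} {β : Type*} [Finite β]
    (τ : FreeGroup (Fin n) →* FreeGroup β) (hτ : Function.Surjective τ) :
    Nat.card β ≤ n := by
  classical
  set M := Multiplicative (ZMod 2)
  have hinj : Function.Injective
      (fun ψ : FreeGroup β →* M => ψ.comp τ) := by
    intro ψ₁ ψ₂ h
    exact (MonoidHom.cancel_right hτ).mp h
  -- transport along the lift equivalences
  have hinj2 : Function.Injective
      (fun f : β → M => (FreeGroup.lift.symm (((FreeGroup.lift f).comp τ)) : Fin n → M)) := by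
    intro f₁ f₂ h
    have := hinj (a₁ := FreeGroup.lift f₁) (a₂ := FreeGroup.lift f₂)
      (by
        apply_fun (FreeGroup.lift (α := Fin n) (β := M)).symm
        exact h)
    exact FreeGroup.lift.injective this
  have hcard := Nat.card_le_card_of_injective _ hinj2
  rw [Nat.card_fun, Nat.card_fun] at hcard
  have hM : Nat.card M = 2 := by
    simp [M, Nat.card_eq_fintype_card]
  rw [hM] at hcard
  simp only [Nat.card_eq_fintype_card, Fintype.card_fin] at hcard
  exact (Nat.pow_le_pow_iff_right (by norm_num)).mp hcard

end RankLtAux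

theorem rank_lt_of_surjective_nontrivial_ker (n : ℕ) {β : Type*} [Finite β]
    (τ : FreeGroup (Fin (n + 1)) →* FreeGroup β)
    (hτ : Function.Surjective τ) (hker : τ.ker ≠ ⊥) :
    Nat.card β < n + 1 := by
  classical
  have hle : Nat.card β ≤ n + 1 := RankLtAux.card_le τ hτ
  rcases lt_or_eq_of_le hle with h | h
  · exact h
  · exfalso
    have : Fintype β := Fintype.ofFinite β
    have hcard : Fintype.card β = n + 1 := by
      rw [← Nat.card_eq_fintype_card]; exact h
    let e : β ≃ Fin (n + 1) := Fintype.equivFinOfCardEq hcard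
    let φ : FreeGroup (Fin (n + 1)) →* FreeGroup (Fin (n + 1)) :=
      (FreeGroup.freeGroupCongr e).toMonoidHom.comp τ
    have hφ : Function.Surjective φ :=
      (FreeGroup.freeGroupCongr e).surjective.comp hτ
    have hhopf := RankLtAux.hopfian φ hφ
    obtain ⟨⟨w, hwker⟩, hw1⟩ := Subgroup.ne_bot_iff_exists_ne_one.mp hker
    have hwφ : w ∈ φ.ker := by
      simp only [MonoidHom.mem_ker] at hwker ⊢
      simp [φ, hwker]
    rw [hhopf, Subgroup.mem_bot] at hwφ
    exact hw1 (Subtype.ext hwφ)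
end

section
/- If H₁ ⊆ H₂ ⊆ ⋯ is an ascending chain of subgroups of a free group F, each of rank at most r, then the chain stabilizes: there exists N such that H_i = H_N for all i ≥ N (Takahasi's theorem). -/
/-- If a group `G` is generated by a finset `S` and admits a homomorphism to `ℤ^n`
whose range contains all standard basis vectors, then `n ≤ S.card`. -/
lemma takahasi_aux {n : ℕ} {G : Type*} [Group G] (f : G →* Multiplicative (Fin n → ℤ))
    (hf : ∀ j : Fin n, Multiplicative.ofAdd (Pi.single j 1) ∈ f.range)
    (S : Finset G) (hS : Subgroup.closure (S : Set G) = ⊤) : n ≤ S.card := by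
  classical
  set T : Finset (Fin n → ℤ) := S.image (fun g => Multiplicative.toAdd (f g)) with hT
  -- every value `toAdd (f g)` lies in the additive closure of `T`
  have key : ∀ g : G, Multiplicative.toAdd (f g) ∈ AddSubgroup.closure (T : Set (Fin n → ℤ)) := by
    intro g
    have hg : g ∈ Subgroup.closure (S : Set G) := by rw [hS]; trivial
    induction hg using Subgroup.closure_induction with
    | mem x hx =>
      exact AddSubgroup.subset_closure (Finset.mem_image.mpr ⟨x, hx, rfl⟩)
    | one => simp only [map_one]; exact AddSubgroup.zero_mem _
    | mul x y hx hy ihx ihy =>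
      simp only [map_mul]
      exact AddSubgroup.add_mem _ ihx ihy
    | inv x hx ihx =>
      simp only [map_inv]
      exact AddSubgroup.neg_mem _ ihx
  -- hence all standard basis vectors are in the ℤ-span of `T`
  have hsingle : ∀ j : Fin n, (Pi.single j 1 : Fin n → ℤ) ∈
      Submodule.span ℤ (T : Set (Fin n → ℤ)) := by
    intro j
    obtain ⟨g, hg⟩ := hf j
    have := key g
    rw [hg] at this
    have h2 : Multiplicative.toAdd (Multiplicative.ofAdd (Pi.single j 1 : Fin n → ℤ))
        = Pi.single j 1 := rfl
    rw [h2] at this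
    rw [← Submodule.span_int_eq_addSubgroupClosure] at this
    exact this
  -- so `T` spans `ℤ^n`
  have hspan : Submodule.span ℤ (T : Set (Fin n → ℤ)) = ⊤ := by
    rw [eq_top_iff]
    intro x _
    have hx : x = ∑ j : Fin n, x j • (Pi.single j 1 : Fin n → ℤ) := by
      funext k
      simp [Finset.sum_apply, Pi.single_apply]
    rw [hx]
    exact Submodule.sum_mem _ fun j _ => Submodule.smul_mem _ _ (hsingle j)
  -- conclude via finrank
  have hv : Submodule.span ℤ (Set.range (fun t : (T : Set (Fin n → ℤ)) => (t : Fin n → ℤ))) = ⊤ := by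
    rwa [Subtype.range_coe]
  have hfin := finrank_le_of_span_eq_top hv
  rw [Module.finrank_fin_fun ℤ] at hfin
  calc n ≤ Fintype.card (T : Set (Fin n → ℤ)) := hfin
    _ = T.card := by simp
    _ ≤ S.card := Finset.card_image_le

theorem takahasi {α : Type*} (r : ℕ) (H : ℕ → Subgroup (FreeGroup α))
    (hmono : Monotone H) [∀ i, Group.FG (H i)]
    (hrank : ∀ i, Group.rank (H i) ≤ r) :
    ∃ N, ∀ i, N ≤ i → H i = H N := by
  classical
  set U : Subgroup (FreeGroup α) := ⨆ i, H i with hU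
  have hle : ∀ i, H i ≤ U := fun i => le_iSup H i
  have hmemU : ∀ x : FreeGroup α, x ∈ U → ∃ i, x ∈ H i := by
    intro x hx
    rw [hU, Subgroup.mem_iSup_of_directed hmono.directed_le] at hx
    exact hx
  -- U is a free group (Nielsen–Schreier)
  haveI : IsFreeGroup U := inferInstance
  obtain ⟨ι, ⟨b⟩⟩ := ‹IsFreeGroup U›.nonempty_basis
  rcases finite_or_infinite ι with hfin | hinf
  · -- finite basis: U is finitely generated, so the chain stabilizes
    haveI : Group.FG (FreeGroup ι) :=
      Group.fg_iff.mpr ⟨Set.range FreeGroup.of, FreeGroup.closure_range_of ι,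
        Set.finite_range _⟩
    haveI : Group.FG U :=
      Group.fg_of_surjective (f := b.repr.symm.toMonoidHom) b.repr.symm.surjective
    have hUfg : U.FG := (Group.fg_iff_subgroup_fg U).mp ‹_›
    obtain ⟨S, hScl, hSfin⟩ := (Subgroup.fg_iff U).mp hUfg
    haveI := hSfin.fintype
    have hidx : ∀ s : S, ∃ i, (s : FreeGroup α) ∈ H i := fun s => hmemU s (by
      rw [← hScl]; exact Subgroup.subset_closure s.2)
    choose idx hidx' using hidx
    set N := Finset.univ.sup idx with hN
    have hSN : S ⊆ (H N : Set (FreeGroup α)) := by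
      intro s hs
      exact hmono (Finset.le_sup (Finset.mem_univ (⟨s, hs⟩ : S))) (hidx' ⟨s, hs⟩)
    have hUN : U ≤ H N := by
      rw [← hScl]
      exact Subgroup.closure_le _ |>.mpr hSN
    refine ⟨N, fun i hi => le_antisymm ?_ (hmono hi)⟩
    exact le_trans (hle i) hUN
  · -- infinite basis: derive a contradiction with the rank bound
    exfalso
    set f : Fin (r + 1) ↪ ι := (Fin.valEmbedding).trans (Infinite.natEmbedding ι) with hf
    set g : ι → Multiplicative (Fin (r + 1) → ℤ) :=
      fun i => Multiplicative.ofAdd (fun k => if f k = i then 1 else 0) with hg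
    set φ : U →* Multiplicative (Fin (r + 1) → ℤ) := b.lift g with hφ
    set u : Fin (r + 1) → U := fun j => b (f j) with hu
    have hφu : ∀ j, φ (u j) = Multiplicative.ofAdd (Pi.single j 1) := by
      intro j
      have h1 : φ (u j) = g (f j) := by
        show (b.lift g) (b (f j)) = g (f j)
        simp only [FreeGroupBasis.lift, Equiv.trans_apply, Equiv.coe_fn_mk,
          MonoidHom.comp_apply, MulEquiv.coe_toMonoidHom]
        rw [b.repr_apply_coe]
        exact FreeGroup.lift_apply_of
      have h2 : (fun k : Fin (r + 1) => if f k = f j then (1 : ℤ) else 0) = Pi.single j 1 := by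
        funext k
        simp [f.injective.eq_iff, Pi.single_apply]
      rw [h1, hg]
      exact congrArg Multiplicative.ofAdd h2
    -- find a common index containing all the u j
    have hidx : ∀ j : Fin (r + 1), ∃ i, ((u j : U) : FreeGroup α) ∈ H i :=
      fun j => hmemU _ (u j).2
    choose idx hidx' using hidx
    set N := Finset.univ.sup idx with hN
    have hmem : ∀ j, ((u j : U) : FreeGroup α) ∈ H N :=
      fun j => hmono (Finset.le_sup (Finset.mem_univ j)) (hidx' j)
    set χ : H N →* Multiplicative (Fin (r + 1) → ℤ) :=
      φ.comp (Subgroup.inclusion (hle N)) with hχ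
    have hχrange : ∀ j : Fin (r + 1),
        Multiplicative.ofAdd (Pi.single j 1) ∈ χ.range := by
      intro j
      refine ⟨⟨((u j : U) : FreeGroup α), hmem j⟩, ?_⟩
      have hincl : Subgroup.inclusion (hle N) ⟨((u j : U) : FreeGroup α), hmem j⟩ = u j :=
        Subtype.ext rfl
      rw [hχ, MonoidHom.comp_apply, hincl, hφu j]
    obtain ⟨S, hScard, hScl⟩ := Group.rank_spec (H N)
    have := takahasi_aux χ hχrange S hScl
    have := hrank N
    omega
end

section
/- For any free group F, any nonempty set π of primes, and any finitely generated subgroup H of F, the π-isolator I_π(H) of H in F is finitely generated; moreover its rank is at most the rank of H. -/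
def IsPiNumber (π : Set ℕ) (m : ℕ) : Prop :=
  0 < m ∧ ∀ p : ℕ, p.Prime → p ∣ m → p ∈ π

def IsPiIsolated {G : Type*} [Group G] (π : Set ℕ) (K : Subgroup G) : Prop :=
  ∀ m : ℕ, IsPiNumber π m → ∀ g : G, g ^ m ∈ K → g ∈ K

def piIsolator {G : Type*} [Group G] (π : Set ℕ) (H : Subgroup G) : Subgroup G :=
  ⨅ (K : Subgroup G) (_ : IsPiIsolated π K ∧ H ≤ K), K

open Subgroup Submodule Module

/-- The canonical homomorphism from a group with free group basis over `ι` to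
`Multiplicative (ι →₀ ℚ)`, sending the basis element `i` to `single i 1`. -/
noncomputable def psiHom {G : Type*} [Group G] {ι : Type*} (b : FreeGroupBasis ι G) :
    G →* Multiplicative (ι →₀ ℚ) :=
  (FreeGroup.lift (fun i => Multiplicative.ofAdd (Finsupp.single i (1 : ℚ)))).comp
    b.repr.toMonoidHom

lemma psiHom_apply_basis {G : Type*} [Group G] {ι : Type*} (b : FreeGroupBasis ι G) (i : ι) :
    psiHom b (b i) = Multiplicative.ofAdd (Finsupp.single i (1 : ℚ)) := by
  simp [psiHom]

/-- If the singles indexed by a finset `T` all lie in a `ℚ`-subspace of dimension at most `n`,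
then `T` has at most `n` elements. -/
lemma card_le_of_single_mem {ι : Type*} {n : ℕ} (T : Finset ι) (W : Submodule ℚ (ι →₀ ℚ))
    [Module.Finite ℚ W] (hW : finrank ℚ W ≤ n)
    (h : ∀ t ∈ T, Finsupp.single t (1 : ℚ) ∈ W) : T.card ≤ n := by
  classical
  have hind : LinearIndependent ℚ (fun t : T => Finsupp.single (t : ι) (1 : ℚ)) := by
    have := (Finsupp.basisSingleOne (R := ℚ) (ι := ι)).linearIndependent.comp
      (fun t : T => (t : ι)) Subtype.val_injective
    simpa [Finsupp.coe_basisSingleOne, Function.comp_def] using this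
  have hle : Submodule.span ℚ (Set.range fun t : T => Finsupp.single (t : ι) (1 : ℚ)) ≤ W := by
    rw [Submodule.span_le]
    rintro _ ⟨t, rfl⟩
    exact h t t.2
  have hfr := Submodule.finrank_mono hle
  rw [finrank_span_eq_card hind, Fintype.card_coe] at hfr
  exact hfr.trans hW

/-- If every finset of the basis index type has cardinality at most `n`, then the group is
generated by at most `n` elements. -/
lemma exists_finset_closure_eq_top {G : Type*} [Group G] {ι : Type*} (b : FreeGroupBasis ι G)
    (n : ℕ) (hyp : ∀ T : Finset ι, T.card ≤ n) :
    ∃ S : Finset G, Subgroup.closure (S : Set G) = ⊤ ∧ S.card ≤ n := by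
  classical
  have hfin : Finite ι := by
    by_contra h
    have : Infinite ι := not_finite_iff_infinite.mp h
    obtain ⟨T, hT⟩ := Infinite.exists_subset_card_eq ι (n + 1)
    have := hyp T
    omega
  haveI := Fintype.ofFinite ι
  refine ⟨Finset.univ.image b, ?_, ?_⟩
  · rw [Finset.coe_image, Finset.coe_univ, Set.image_univ]
    have h1 : Subgroup.closure (⇑b.repr.symm.toMonoidHom '' Set.range (FreeGroup.of (α := ι)))
        = ⊤ := by
      rw [← MonoidHom.map_closure, FreeGroup.closure_range_of, ← MonoidHom.range_eq_map]
      exact MonoidHom.range_eq_top_of_surjective _ b.repr.symm.surjective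
    rw [← h1]
    congr 1
    rw [← Set.range_comp]
    rfl
  · exact Finset.card_image_le.trans (by simpa using hyp Finset.univ)

/-- Push a finite generating set of a subgroup (as abstract group) to the ambient group. -/
lemma exists_finset_closure_eq {G : Type*} [Group G] {U : Subgroup G} (S : Finset U)
    (h : Subgroup.closure (S : Set U) = ⊤) :
    ∃ S' : Finset G, Subgroup.closure (S' : Set G) = U ∧ S'.card ≤ S.card := by
  classical
  refine ⟨S.image ⇑U.subtype, ?_, Finset.card_image_le⟩
  rw [Finset.coe_image, ← MonoidHom.map_closure U.subtype, h, ← MonoidHom.range_eq_map]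
  exact U.range_subtype

lemma finset_mem_chain_of_mem_sSup {G : Type*} [Group G] {c : Set (Subgroup G)}
    (hne : c.Nonempty) (hc : IsChain (· ≤ ·) c) (A : Finset G)
    (hA : ∀ a ∈ A, a ∈ sSup c) : ∃ K ∈ c, ∀ a ∈ A, a ∈ K := by
  classical
  induction A using Finset.induction with
  | empty =>
    obtain ⟨K, hK⟩ := hne
    exact ⟨K, hK, by simp⟩
  | @insert x A hx ih =>
    obtain ⟨K, hKc, hK⟩ := ih (fun a ha => hA a (Finset.mem_insert_of_mem ha))
    have hxs : x ∈ sSup c := hA x (Finset.mem_insert_self x A)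
    rw [Subgroup.mem_sSup_of_directedOn hne hc.directedOn] at hxs
    obtain ⟨K', hK'c, hxK'⟩ := hxs
    rcases hc.total hKc hK'c with hle | hle
    · exact ⟨K', hK'c, fun a ha => by
        rcases Finset.mem_insert.mp ha with rfl | ha
        · exact hxK'
        · exact hle (hK a ha)⟩
    · exact ⟨K, hKc, fun a ha => by
        rcases Finset.mem_insert.mp ha with rfl | ha
        · exact hle hxK'
        · exact hK a ha⟩

section Core

variable {α : Type u}

/-- Core cardinality bound: if `U` is a subgroup of a free group with free group basis `b`
over `ι`, `s` is a finset of at most `n` elements of `U`, and every basis element indexed by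
`T` lies (inside `U`) in the subgroup `V` which is the preimage under `psiHom b` of the
`ℚ`-span of the images of `s`, then `T.card ≤ n`. -/
lemma core_card_le {G : Type*} [Group G] {U : Subgroup G} {ι : Type*}
    (b : FreeGroupBasis ι U) {n : ℕ} (s : Finset G) (hsU : ∀ x ∈ s, x ∈ U)
    (hcard : s.card ≤ n) (T : Finset ι)
    (hT : ∀ t ∈ T, ((b t : U) : G) ∈ Subgroup.map U.subtype (Subgroup.comap (psiHom b)
      (AddSubgroup.toSubgroup (Submodule.span ℚ (Set.range fun x : {x // x ∈ s} =>
        (psiHom b ⟨x.1, hsU x.1 x.2⟩).toAdd)).toAddSubgroup))) :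
    T.card ≤ n := by
  classical
  set W : Submodule ℚ (ι →₀ ℚ) := Submodule.span ℚ (Set.range fun x : {x // x ∈ s} =>
    (psiHom b ⟨x.1, hsU x.1 x.2⟩).toAdd) with hW
  haveI : Module.Finite ℚ W := FiniteDimensional.span_of_finite ℚ (Set.finite_range _)
  have hWn : finrank ℚ W ≤ n := by
    refine le_trans ?_ hcard
    have := finrank_range_le_card (R := ℚ) (fun x : {x // x ∈ s} =>
      (psiHom b ⟨x.1, hsU x.1 x.2⟩).toAdd)
    simpa [Set.finrank, Fintype.card_coe] using this
  refine card_le_of_single_mem T W hWn ?_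
  intro t ht
  obtain ⟨y, hyV, hy⟩ := hT t ht
  have hyb : y = b t := Subtype.val_injective hy
  subst hyb
  have : (psiHom b (b t)).toAdd ∈ W := hyV
  rwa [psiHom_apply_basis] at this

end Core

/-- Adjoining an `m`-th root (with `m > 0`) to a subgroup of a free group generated by at most
`n` elements yields a subgroup generated by at most `n` elements. -/
lemma root_step {α : Type u} {n m : ℕ} (hm : 0 < m) (s : Finset (FreeGroup α))
    (hcard : s.card ≤ n) (g : FreeGroup α)
    (hg : g ^ m ∈ Subgroup.closure (s : Set (FreeGroup α))) :
    ∃ S : Finset (FreeGroup α),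
      Subgroup.closure (S : Set (FreeGroup α)) =
        Subgroup.closure (s : Set (FreeGroup α)) ⊔ Subgroup.closure {g} ∧ S.card ≤ n := by
  classical
  set M : Subgroup (FreeGroup α) := Subgroup.closure (s : Set (FreeGroup α)) with hM
  set U : Subgroup (FreeGroup α) := M ⊔ Subgroup.closure {g} with hU
  obtain ⟨ι, ⟨b⟩⟩ := (subgroupIsFreeOfIsFree U).nonempty_basis
  have hsU : ∀ x ∈ s, x ∈ U := fun x hx =>
    le_sup_left (α := Subgroup (FreeGroup α)) (Subgroup.subset_closure hx)
  have hgU : g ∈ U := le_sup_right (α := Subgroup (FreeGroup α))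
    (Subgroup.subset_closure (Set.mem_singleton g))
  set W : Submodule ℚ (ι →₀ ℚ) := Submodule.span ℚ (Set.range fun x : {x // x ∈ s} =>
    (psiHom b ⟨x.1, hsU x.1 x.2⟩).toAdd) with hWdef
  set V : Subgroup U := Subgroup.comap (psiHom b)
    (AddSubgroup.toSubgroup W.toAddSubgroup) with hVdef
  -- M is contained in the image of V
  have hMV : M ≤ Subgroup.map U.subtype V := by
    rw [hM, Subgroup.closure_le]
    intro x hx
    refine ⟨⟨x, hsU x hx⟩, ?_, rfl⟩
    exact Submodule.subset_span ⟨⟨x, hx⟩, rfl⟩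
  -- g is in V (here we use the root property and divisibility in ℚ)
  have hgV : (⟨g, hgU⟩ : U) ∈ V := by
    have hgmM : g ^ m ∈ M := hg
    have h1 : ((⟨g, hgU⟩ : U) ^ m : U) ∈ V := by
      have hmap : ((⟨g, hgU⟩ : U) ^ m : FreeGroup α) ∈ Subgroup.map U.subtype V :=
        hMV (by simpa using hgmM)
      obtain ⟨y, hyV, hy⟩ := hmap
      have hy' : y = (⟨g, hgU⟩ : U) ^ m := Subtype.val_injective hy
      rwa [hy'] at hyV
    have h1' : (psiHom b ((⟨g, hgU⟩ : U) ^ m)).toAdd ∈ W := h1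
    rw [map_pow, toAdd_pow] at h1'
    show (psiHom b (⟨g, hgU⟩ : U)).toAdd ∈ W
    have h2 : ((m : ℚ)⁻¹ • (m • (psiHom b (⟨g, hgU⟩ : U)).toAdd) : ι →₀ ℚ) ∈ W :=
      W.smul_mem _ h1'
    rwa [← Nat.cast_smul_eq_nsmul ℚ m, inv_smul_smul₀ (by exact_mod_cast hm.ne')] at h2
  have hUV : U ≤ Subgroup.map U.subtype V := by
    refine sup_le hMV ?_
    rw [Subgroup.closure_le]
    intro x hx
    rw [Set.mem_singleton_iff] at hx
    subst hx
    exact ⟨⟨x, hgU⟩, hgV, rfl⟩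
  have hcardT : ∀ T : Finset ι, T.card ≤ n := by
    intro T
    refine core_card_le b s hsU hcard T ?_
    intro t _
    exact hUV (b t).2
  obtain ⟨S₀, hS₀, hS₀card⟩ := exists_finset_closure_eq_top b n hcardT
  obtain ⟨S, hS, hScard⟩ := exists_finset_closure_eq S₀ hS₀
  exact ⟨S, hS, hScard.trans hS₀card⟩

/-- The supremum of a nonempty chain of subgroups of a free group, each generated by at most
`n` elements, is generated by at most `n` elements. -/
lemma chain_step {α : Type u} {n : ℕ} {c : Set (Subgroup (FreeGroup α))} (hne : c.Nonempty)
    (hc : IsChain (· ≤ ·) c)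
    (hgen : ∀ K ∈ c, ∃ s : Finset (FreeGroup α),
      Subgroup.closure (s : Set (FreeGroup α)) = K ∧ s.card ≤ n) :
    ∃ S : Finset (FreeGroup α),
      Subgroup.closure (S : Set (FreeGroup α)) = sSup c ∧ S.card ≤ n := by
  classical
  set U : Subgroup (FreeGroup α) := sSup c with hUdef
  obtain ⟨ι, ⟨b⟩⟩ := (subgroupIsFreeOfIsFree U).nonempty_basis
  have hcardT : ∀ T : Finset ι, T.card ≤ n := by
    intro T
    -- collect the (finitely many) basis elements indexed by T in one member of the chain
    set A : Finset (FreeGroup α) := T.image (fun t => ((b t : U) : FreeGroup α)) with hA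
    obtain ⟨K, hKc, hK⟩ := finset_mem_chain_of_mem_sSup hne hc A
      (fun a ha => by
        obtain ⟨t, _, rfl⟩ := Finset.mem_image.mp ha
        exact (b t).2)
    obtain ⟨s, hs, hscard⟩ := hgen K hKc
    have hKU : K ≤ U := le_sSup hKc
    have hsU : ∀ x ∈ s, x ∈ U := fun x hx => hKU (hs ▸ Subgroup.subset_closure hx)
    set W : Submodule ℚ (ι →₀ ℚ) := Submodule.span ℚ (Set.range fun x : {x // x ∈ s} =>
      (psiHom b ⟨x.1, hsU x.1 x.2⟩).toAdd) with hWdef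
    set V : Subgroup U := Subgroup.comap (psiHom b)
      (AddSubgroup.toSubgroup W.toAddSubgroup) with hVdef
    have hKV : K ≤ Subgroup.map U.subtype V := by
      rw [← hs, Subgroup.closure_le]
      intro x hx
      refine ⟨⟨x, hsU x hx⟩, ?_, rfl⟩
      exact Submodule.subset_span ⟨⟨x, hx⟩, rfl⟩
    refine core_card_le b s hsU hscard T ?_
    intro t ht
    refine hKV ?_
    exact hK _ (Finset.mem_image.mpr ⟨t, ht, rfl⟩)
  obtain ⟨S₀, hS₀, hS₀card⟩ := exists_finset_closure_eq_top b n hcardT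
  obtain ⟨S, hS, hScard⟩ := exists_finset_closure_eq S₀ hS₀
  exact ⟨S, hS, hScard.trans hS₀card⟩

theorem piIsolator_fg {α : Type*} (π : Set ℕ) (hπ : π.Nonempty)
    (hπ' : ∀ p ∈ π, p.Prime) (H : Subgroup (FreeGroup α)) [Group.FG H] :
    ∃ S : Finset (FreeGroup α),
      Subgroup.closure (S : Set (FreeGroup α)) = piIsolator π H ∧
      S.card ≤ Group.rank H := by
  classical
  set I : Subgroup (FreeGroup α) := piIsolator π H with hIdef
  set n : ℕ := Group.rank H with hn
  have hHI : H ≤ I := le_iInf fun K => le_iInf fun hK => hK.2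
  have hIiso : IsPiIsolated π I := by
    intro m hm g hg
    simp only [hIdef, piIsolator, Subgroup.mem_iInf] at hg ⊢
    intro K hK
    exact hK.1 m hm g (hg K hK)
  -- the family of intermediate subgroups generated by at most n elements
  set C : Set (Subgroup (FreeGroup α)) :=
    {K | H ≤ K ∧ K ≤ I ∧ ∃ S : Finset (FreeGroup α),
      Subgroup.closure (S : Set (FreeGroup α)) = K ∧ S.card ≤ n} with hC
  have hHC : H ∈ C := by
    obtain ⟨S₀, hS₀card, hS₀⟩ := Group.rank_spec H
    obtain ⟨S, hS, hScard⟩ := exists_finset_closure_eq S₀ hS₀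
    exact ⟨le_refl H, hHI, S, hS, hScard.trans_eq hS₀card⟩
  obtain ⟨M, hHM, hMmax⟩ := zorn_le_nonempty₀ C
    (fun c hcC hchain y hy => by
      refine ⟨sSup c, ?_, fun z hz => le_sSup hz⟩
      have hne : c.Nonempty := ⟨y, hy⟩
      obtain ⟨S, hS, hScard⟩ := chain_step hne hchain
        (fun K hK => (hcC hK).2.2)
      exact ⟨(hcC hy).1.trans (le_sSup hy), sSup_le (fun K hK => (hcC hK).2.1),
        S, hS, hScard⟩) H hHC
  obtain ⟨hHM', hMI, sM, hsM, hsMcard⟩ := hMmax.prop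
  -- the maximal element is π-isolated
  have hMiso : IsPiIsolated π M := by
    intro m hm g hgm
    by_contra hgM
    have hgI : g ∈ I := hIiso m hm g (hMI hgm)
    obtain ⟨S, hS, hScard⟩ := root_step hm.1 sM hsMcard g (by rwa [hsM])
    rw [hsM] at hS
    have hMgC : (M ⊔ Subgroup.closure {g}) ∈ C := by
      refine ⟨hHM'.trans le_sup_left, sup_le hMI ?_, S, hS, hScard⟩
      rw [Subgroup.closure_le]
      simpa using hgI
    have hle : M ⊔ Subgroup.closure {g} ≤ M := hMmax.2 hMgC le_sup_left
    exact hgM (hle (le_sup_right (α := Subgroup (FreeGroup α))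
      (Subgroup.subset_closure (Set.mem_singleton g))))
  have hIM : I ≤ M := by
    rw [hIdef, piIsolator]
    exact iInf_le_of_le M (iInf_le_of_le ⟨hMiso, hHM'⟩ (le_refl M))
  have hMI' : M = I := le_antisymm hMI hIM
  exact ⟨sM, by rw [hsM, hMI'], hsMcard⟩
end

section
/- For any free group F and any finitely generated subgroup H of F, the isolator I(H) of H (the smallest isolated subgroup containing H) is finitely generated, with rank at most the rank of H. -/
def IsIsolated {G : Type*} [Group G] (K : Subgroup G) : Prop :=
  ∀ g : G, ∀ m : ℕ, 0 < m → g ^ m ∈ K → g ∈ K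

def isolator {G : Type*} [Group G] (H : Subgroup G) : Subgroup G :=
  ⨅ (K : Subgroup G) (_ : IsIsolated K ∧ H ≤ K), K

section lemmas
variable {G : Type*} [Group G]

lemma le_isolator (H : Subgroup G) : H ≤ isolator H :=
  le_iInf fun _ => le_iInf fun hK => hK.2

lemma isolator_isolated (H : Subgroup G) : IsIsolated (isolator H) := by
  intro g m hm hgm
  simp only [isolator, Subgroup.mem_iInf] at hgm ⊢
  intro K hK
  exact hK.1 g m hm (hgm K hK)

lemma isolator_le {H K : Subgroup G} (h1 : IsIsolated K) (h2 : H ≤ K) : isolator H ≤ K :=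
  iInf_le_of_le K (iInf_le_of_le ⟨h1, h2⟩ le_rfl)

lemma IsFreeGroup.closure_range_of (G : Type*) [Group G] [IsFreeGroup G] :
    Subgroup.closure (Set.range (IsFreeGroup.of : IsFreeGroup.Generators G → G)) = ⊤ := by
  set C := Subgroup.closure (Set.range (IsFreeGroup.of : IsFreeGroup.Generators G → G)) with hC
  have h : C.subtype.comp (IsFreeGroup.lift (fun a =>
      (⟨IsFreeGroup.of a, Subgroup.subset_closure (Set.mem_range_self a)⟩ : C))) =
      MonoidHom.id G := by
    apply IsFreeGroup.ext_hom
    intro a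
    simp [IsFreeGroup.lift_of]
  rw [eq_top_iff]
  intro g _
  have h2 : ((IsFreeGroup.lift (fun a =>
      (⟨IsFreeGroup.of a, Subgroup.subset_closure (Set.mem_range_self a)⟩ : C)) g : C) : G)
      = g := DFunLike.congr_fun h g
  exact h2 ▸ ((IsFreeGroup.lift (fun a =>
      (⟨IsFreeGroup.of a, Subgroup.subset_closure (Set.mem_range_self a)⟩ : C))) g).2

end lemmas

theorem isolator_fg {α : Type*} (H : Subgroup (FreeGroup α)) [Group.FG H] :
    ∃ S : Finset (FreeGroup α),
      Subgroup.closure (S : Set (FreeGroup α)) = isolator H ∧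
      S.card ≤ Group.rank H := by
  classical
  set I := isolator H with hI
  have hHI : H ≤ I := le_isolator H
  have hIiso : IsIsolated I := isolator_isolated H
  set γ := IsFreeGroup.Generators ↥I with hγ
  set f : ↥I →* Multiplicative (γ →₀ ℚ) :=
    IsFreeGroup.lift (fun c => Multiplicative.ofAdd (Finsupp.single c 1)) with hf
  obtain ⟨T, hTcard, hTclosure⟩ := Group.rank_spec ↥H
  set w : Finset (γ →₀ ℚ) :=
    T.image (fun t => Multiplicative.toAdd (f (Subgroup.inclusion hHI t))) with hw
  set V : Submodule ℚ (γ →₀ ℚ) := Submodule.span ℚ (w : Set (γ →₀ ℚ)) with hV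
  have hHV : ∀ t : ↥H, Multiplicative.toAdd (f (Subgroup.inclusion hHI t)) ∈ V := by
    intro t
    have ht : t ∈ Subgroup.closure (T : Set ↥H) := by rw [hTclosure]; trivial
    induction ht using Subgroup.closure_induction with
    | mem x hx =>
        exact Submodule.subset_span (by exact Finset.mem_coe.mpr (Finset.mem_image_of_mem _ hx))
    | one => simpa using V.zero_mem
    | mul x y hx hy px py => rw [map_mul, map_mul, toAdd_mul]; exact V.add_mem px py
    | inv x hx px => rw [map_inv, map_inv, toAdd_inv]; exact V.neg_mem px
  set K : Subgroup (FreeGroup α) :=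
    { carrier := {x | ∃ hx : x ∈ I, Multiplicative.toAdd (f ⟨x, hx⟩) ∈ V}
      one_mem' := ⟨I.one_mem, by
        have e1 : (⟨(1 : FreeGroup α), I.one_mem⟩ : ↥I) = 1 := rfl
        rw [e1, map_one, toAdd_one]
        exact V.zero_mem⟩
      mul_mem' := by
        rintro a b ⟨ha, hva⟩ ⟨hb, hvb⟩
        refine ⟨I.mul_mem ha hb, ?_⟩
        have : (⟨a * b, I.mul_mem ha hb⟩ : ↥I) = ⟨a, ha⟩ * ⟨b, hb⟩ := rfl
        rw [this, map_mul, toAdd_mul]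
        exact V.add_mem hva hvb
      inv_mem' := by
        rintro a ⟨ha, hva⟩
        refine ⟨I.inv_mem ha, ?_⟩
        have : (⟨a⁻¹, I.inv_mem ha⟩ : ↥I) = (⟨a, ha⟩ : ↥I)⁻¹ := rfl
        rw [this, map_inv, toAdd_inv]
        exact V.neg_mem hva } with hK
  have hKiso : IsIsolated K := by
    rintro g m hm ⟨hgm, hvm⟩
    have hg : g ∈ I := hIiso g m hm hgm
    refine ⟨hg, ?_⟩
    have e : (⟨g ^ m, hgm⟩ : ↥I) = (⟨g, hg⟩ : ↥I) ^ m := by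
      ext; rfl
    rw [e, map_pow, toAdd_pow] at hvm
    have h1 : ((m : ℚ)) • Multiplicative.toAdd (f ⟨g, hg⟩) ∈ V := by
      rw [Nat.cast_smul_eq_nsmul]; exact hvm
    have h2 := V.smul_mem ((m : ℚ)⁻¹) h1
    rwa [inv_smul_smul₀ (Nat.cast_ne_zero.mpr hm.ne')] at h2
  have hHK : H ≤ K := fun x hx => ⟨hHI hx, hHV ⟨x, hx⟩⟩
  have hIK : I ≤ K := hI ▸ isolator_le hKiso hHK
  have hsingle : ∀ c : γ, Finsupp.single c (1 : ℚ) ∈ V := by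
    intro c
    obtain ⟨hc, hvc⟩ := hIK (IsFreeGroup.of c : ↥I).2
    have e : (⟨((IsFreeGroup.of c : ↥I) : FreeGroup α), hc⟩ : ↥I) = IsFreeGroup.of c :=
      Subtype.ext rfl
    rw [e, hf, IsFreeGroup.lift_of] at hvc
    simpa using hvc
  have hind : LinearIndependent ℚ (fun c : γ => Finsupp.single c (1 : ℚ)) := by
    have := (Finsupp.basisSingleOne : Module.Basis γ ℚ (γ →₀ ℚ)).linearIndependent
    rwa [Finsupp.coe_basisSingleOne] at this
  have hrange : Set.range (fun c : γ => Finsupp.single c (1 : ℚ)) ≤ V := by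
    rintro _ ⟨c, rfl⟩; exact hsingle c
  haveI : Finite γ := hind.finite_of_le_span_finite _ (w : Set (γ →₀ ℚ)) hrange
  letI : Fintype γ := Fintype.ofFinite γ
  have hcard : Fintype.card γ ≤ T.card := by
    have h3 := linearIndependent_le_span' _ hind (w : Set (γ →₀ ℚ)) hrange
    rw [Cardinal.mk_fintype] at h3
    have h4 : Fintype.card ((w : Set (γ →₀ ℚ)) : Type _) = w.card := by
      simp
    rw [h4] at h3
    exact_mod_cast le_trans (by exact_mod_cast h3) Finset.card_image_le
  refine ⟨Finset.univ.image (fun c : γ => ((IsFreeGroup.of c : ↥I) : FreeGroup α)), ?_, ?_⟩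
  · have hcoe : (↑(Finset.univ.image (fun c : γ => ((IsFreeGroup.of c : ↥I) : FreeGroup α)))
        : Set (FreeGroup α)) = I.subtype '' Set.range (IsFreeGroup.of : γ → ↥I) := by
      rw [Finset.coe_image, Finset.coe_univ, Set.image_univ, ← Set.range_comp]
      rfl
    rw [hcoe, ← MonoidHom.map_closure, IsFreeGroup.closure_range_of,
      ← MonoidHom.range_eq_map, Subgroup.subtype_range]
  · calc (Finset.univ.image (fun c : γ => ((IsFreeGroup.of c : ↥I) : FreeGroup α))).card
        ≤ Finset.univ.card := Finset.card_image_le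
      _ = Fintype.card γ := Finset.card_univ
      _ ≤ T.card := hcard
      _ = Group.rank ↥H := hTcard
end

section
/- Let G be a group, π a set of primes, and H ≤ G. If H is finitely generated and I_π(H) is not finitely generated, and if moreover every proper subgroup of I_π(H) containing H fails to be π-isolated, then there exists a strictly increasing infinite chain H = H₁ < H₂ < H₃ < ⋯ of subgroups of I_π(H) with H_{i+1} generated by H_i and a single element f_i satisfying f_i ∉ H_i and f_i^{m_i} ∈ H_i for some π-number m_i. -/
lemma subgroup_fg_sup {G : Type*} [Group G] {K L : Subgroup G} (hK : K.FG) (hL : L.FG) :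
    (K ⊔ L).FG := by
  rw [Subgroup.fg_iff] at hK hL ⊢
  obtain ⟨S, hS, hSf⟩ := hK
  obtain ⟨T, hT, hTf⟩ := hL
  exact ⟨S ∪ T, by rw [Subgroup.closure_union, hS, hT], hSf.union hTf⟩

lemma le_piIsolator {G : Type*} [Group G] (π : Set ℕ) (H : Subgroup G) :
    H ≤ piIsolator π H :=
  le_iInf fun _ => le_iInf fun hK => hK.2

lemma piIsolator_isolated {G : Type*} [Group G] (π : Set ℕ) (H : Subgroup G) :
    IsPiIsolated π (piIsolator π H) := by
  intro m hm g hg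
  simp only [piIsolator, Subgroup.mem_iInf] at hg ⊢
  intro K hK
  exact hK.1 m hm g (hg K hK)

theorem exists_strict_chain {G : Type*} [Group G] (π : Set ℕ)
    (hπ : ∀ p ∈ π, p.Prime) (H : Subgroup G) (hHfg : H.FG)
    (hIfg : ¬ (piIsolator π H).FG)
    (hprop : ∀ K : Subgroup G, H ≤ K → K ≤ piIsolator π H →
      K ≠ piIsolator π H → ¬ IsPiIsolated π K) :
    ∃ (Hc : ℕ → Subgroup G) (f : ℕ → G) (m : ℕ → ℕ),
      Hc 0 = H ∧ StrictMono Hc ∧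
      (∀ i, Hc i ≤ piIsolator π H) ∧
      (∀ i, Hc (i + 1) = Hc i ⊔ Subgroup.closure {f i}) ∧
      (∀ i, f i ∉ Hc i) ∧
      (∀ i, IsPiNumber π (m i) ∧ f i ^ m i ∈ Hc i) := by
  set I := piIsolator π H with hI
  have key : ∀ K : Subgroup G, (H ≤ K ∧ K ≤ I ∧ K.FG) →
      ∃ g : G, ∃ m : ℕ, IsPiNumber π m ∧ g ^ m ∈ K ∧ g ∉ K ∧
        (H ≤ K ⊔ Subgroup.closure {g} ∧ K ⊔ Subgroup.closure {g} ≤ I ∧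
          (K ⊔ Subgroup.closure {g}).FG) := by
    rintro K ⟨h1, h2, h3⟩
    have hne : K ≠ I := fun h => hIfg (h ▸ h3)
    have hniso := hprop K h1 h2 hne
    simp only [IsPiIsolated, not_forall] at hniso
    obtain ⟨m, hm, g, hgm, hgK⟩ := hniso
    have hgI : g ∈ I := piIsolator_isolated π H m hm g (h2 hgm)
    refine ⟨g, m, hm, hgm, hgK, le_trans h1 le_sup_left,
      sup_le h2 (by rwa [Subgroup.closure_le, Set.singleton_subset_iff]),
      subgroup_fg_sup h3 ⟨{g}, by simp⟩⟩
  choose g mfn hm1 hm2 hm3 hm4 using key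
  set D : ℕ → {K : Subgroup G // H ≤ K ∧ K ≤ I ∧ K.FG} :=
    fun n => Nat.rec ⟨H, le_refl H, le_piIsolator π H, hHfg⟩
      (fun _ p => ⟨p.1 ⊔ Subgroup.closure {g p.1 p.2}, hm4 p.1 p.2⟩) n with hD
  refine ⟨fun i => (D i).1, fun i => g (D i).1 (D i).2, fun i => mfn (D i).1 (D i).2,
    rfl, ?_, fun i => (D i).2.2.1, fun i => rfl, fun i => hm3 (D i).1 (D i).2,
    fun i => ⟨hm1 (D i).1 (D i).2, hm2 (D i).1 (D i).2⟩⟩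
  apply strictMono_nat_of_lt_succ
  intro n
  have : g (D n).1 (D n).2 ∉ (D n).1 := hm3 (D n).1 (D n).2
  have hle : (D n).1 ≤ (D (n+1)).1 := le_sup_left
  refine lt_of_le_of_ne hle fun h => this ?_
  have h2 : Subgroup.closure {g (D n).1 (D n).2} ≤ (D n).1 :=
    le_trans le_sup_right h.ge
  exact h2 (Subgroup.mem_closure_singleton_self _)
end

section
/- Every strictly increasing chain of finitely generated subgroups H₁ < H₂ < ⋯ of a free group F must have unbounded ranks: for every r there exists i with rank(H_i) > r, provided the chain is infinite. -/
theorem strict_chain_unbounded_rank {α : Type*}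
    (H : ℕ → Subgroup (FreeGroup α)) (hmono : StrictMono H)
    [∀ i, Group.FG (H i)] :
    ∀ r : ℕ, ∃ i, r < Group.rank (H i) := by
  intro r
  by_contra hcon
  push_neg at hcon
  set L : Subgroup (FreeGroup α) := ⨆ i, H i with hLdef
  have hdir : Directed (· ≤ ·) H := hmono.monotone.directed_le
  have hmem : ∀ x : L, ∃ i, (x : FreeGroup α) ∈ H i := fun x =>
    (Subgroup.mem_iSup_of_directed hdir).mp x.2
  cases finite_or_infinite (IsFreeGroup.Generators L) with
  | inl hfin =>
      -- L is finitely generated, hence contained in some H N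
      haveI : Group.FG (FreeGroup (IsFreeGroup.Generators L)) :=
        Group.fg_iff.mpr ⟨Set.range FreeGroup.of, FreeGroup.closure_range_of _,
          Set.finite_range _⟩
      haveI : Group.FG L :=
        Group.fg_of_surjective (f := (IsFreeGroup.toFreeGroup (G := L)).symm.toMonoidHom)
          (IsFreeGroup.toFreeGroup (G := L)).symm.surjective
      obtain ⟨S, -, hSclosure⟩ := Group.rank_spec L
      choose j hj using hmem
      set N := S.sup j with hN
      have key : L ≤ H N := by
        intro x hx
        have hxS : (⟨x, hx⟩ : L) ∈ Subgroup.closure (S : Set L) := by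
          rw [hSclosure]; trivial
        have hres := Subgroup.closure_induction
          (p := fun (y : L) _ => (y : FreeGroup α) ∈ H N)
          (fun y hy => hmono.monotone (Finset.le_sup hy) (hj y))
          ((H N).one_mem)
          (fun y z _ _ hy hz => (H N).mul_mem hy hz)
          (fun y _ hy => (H N).inv_mem hy) hxS
        exact hres
      exact (hmono (Nat.lt_succ_self N)).not_ge (le_trans (le_iSup H (N + 1)) key)
  | inr hinf =>
      -- pick r+1 basis elements of L
      let ι : Fin (r + 1) ↪ IsFreeGroup.Generators L :=
        Fin.valEmbedding.trans (Infinite.natEmbedding _)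
      let A := Multiplicative (Fin (r + 1) → ZMod 2)
      let g : IsFreeGroup.Generators L → A :=
        Function.extend ι (fun k => Multiplicative.ofAdd (Pi.single k 1)) 1
      let ψ : L →* A := IsFreeGroup.lift g
      choose j hj using fun k : Fin (r + 1) => hmem (IsFreeGroup.of (ι k))
      set N := Finset.univ.sup j with hN
      have hjN : ∀ k, ((IsFreeGroup.of (ι k) : L) : FreeGroup α) ∈ H N :=
        fun k => hmono.monotone (Finset.le_sup (Finset.mem_univ k)) (hj k)
      let φ : (H N) →* A := ψ.comp (Subgroup.inclusion (le_iSup H N))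
      have hφk : ∀ k, φ ⟨_, hjN k⟩ = Multiplicative.ofAdd (Pi.single k 1) := by
        intro k
        have h1 : Subgroup.inclusion (le_iSup H N)
            (⟨((IsFreeGroup.of (ι k) : L) : FreeGroup α), hjN k⟩ : H N)
            = IsFreeGroup.of (ι k) := by
          apply Subtype.ext; rfl
        show ψ (Subgroup.inclusion (le_iSup H N) ⟨_, hjN k⟩) = _
        rw [h1]
        show IsFreeGroup.lift g (IsFreeGroup.of (ι k)) = _
        rw [IsFreeGroup.lift_of]
        exact ι.injective.extend_apply _ _ _
      have hpow : ∀ (k : Fin (r + 1)) (c : ZMod 2),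
          (Multiplicative.ofAdd (Pi.single k (1 : ZMod 2)) : A) ^ c.val
          = (Multiplicative.ofAdd (Pi.single k c) : A) := by
        intro k c
        rw [← ofAdd_nsmul]
        congr 1
        rw [← Pi.single_smul]
        rw [nsmul_eq_mul, mul_one, ZMod.natCast_val, ZMod.cast_id]
      have hsurj : Function.Surjective φ := by
        intro a
        have key : ∀ k : Fin (r + 1),
            Multiplicative.ofAdd (Pi.single k ((Multiplicative.toAdd a) k)) ∈ φ.range := by
          intro k
          refine ⟨(⟨_, hjN k⟩ : H N) ^ ((Multiplicative.toAdd a) k).val, ?_⟩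
          rw [map_pow, hφk, hpow]
        have ha : (∏ k, Multiplicative.ofAdd (Pi.single k ((Multiplicative.toAdd a) k))) = a := by
          rw [← ofAdd_sum, Finset.univ_sum_single, ofAdd_toAdd]
        obtain ⟨x, hx⟩ := (ha ▸ Subgroup.prod_mem φ.range (fun k _ => key k) :
          a ∈ φ.range)
        exact ⟨x, hx⟩
      haveI : Group.FG A := inferInstance
      have h1 : Group.rank A ≤ Group.rank (H N) := Group.rank_le_of_surjective φ hsurj
      have h2 : Nat.card A ∣ 2 ^ Group.rank A := by
        refine card_dvd_exponent_pow_rank' A (fun x => ?_)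
        have : Multiplicative.toAdd (x ^ 2) = 0 := by
          rw [toAdd_pow, two_smul]
          funext k
          exact CharTwo.add_self_eq_zero _
        simpa using congrArg Multiplicative.ofAdd this
      have h3 : Nat.card A = 2 ^ (r + 1) := by
        simp [A, Nat.card_eq_fintype_card]
      rw [h3] at h2
      have h4 : r + 1 ≤ Group.rank A :=
        (Nat.pow_dvd_pow_iff_le_right one_lt_two).mp h2
      have h5 := hcon N
      omega
end

section
/- Let F be a free group and H ≤ F finitely generated of rank n. For any finite sequence of elements f₁,…,f_k ∈ F and positive integers m₁,…,m_k such that, setting H₀ = H and H_j = ⟨H_{j-1}, f_j⟩, one has f_j ≠ 1 and f_j^{m_j} ∈ H_{j-1} for each j, the rank of H_k is at most n. -/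
open Subgroup Function

universe u

theorem key_step {α : Type u} (S : Finset (FreeGroup α)) (g : FreeGroup α)
    (m : ℕ) (hm : 0 < m)
    (hgm : g ^ m ∈ Subgroup.closure (S : Set (FreeGroup α))) :
    ∃ T : Finset (FreeGroup α),
      Subgroup.closure (T : Set (FreeGroup α)) =
        Subgroup.closure (S : Set (FreeGroup α)) ⊔ Subgroup.closure {g} ∧
      T.card ≤ S.card := by
  classical
  set K : Subgroup (FreeGroup α) :=
    Subgroup.closure (S : Set (FreeGroup α)) ⊔ Subgroup.closure {g} with hK
  have hSK : Subgroup.closure (S : Set (FreeGroup α)) ≤ K := le_sup_left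
  have hgK : g ∈ K := Subgroup.mem_sup_right (Subgroup.subset_closure rfl)
  have hKU : K = Subgroup.closure ((S : Set (FreeGroup α)) ∪ {g}) :=
    (Subgroup.closure_union _ _).symm
  -- K is a free group (Nielsen–Schreier)
  set β := IsFreeGroup.Generators ↥K with hβ
  set e : ↥K ≃* FreeGroup β := IsFreeGroup.toFreeGroup ↥K with he
  -- abelianization map
  set π : FreeGroup β →* Multiplicative (β →₀ ℤ) :=
    FreeGroup.lift (fun b => Multiplicative.ofAdd (Finsupp.single b 1)) with hπ
  set ab : ↥K →* Multiplicative (β →₀ ℤ) := π.comp e.toMonoidHom with hab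
  -- the |S|+1 generators' images
  set q : Option {x : FreeGroup α // x ∈ S} → (β →₀ ℤ) := fun j =>
    j.elim (ab ⟨g, hgK⟩).toAdd
      (fun s => (ab ⟨s.1, hSK (Subgroup.subset_closure s.2)⟩).toAdd) with hq
  set u : (Option {x : FreeGroup α // x ∈ S} →₀ ℤ) →ₗ[ℤ] (β →₀ ℤ) :=
    Finsupp.linearCombination ℤ q with hu
  -- images of elements of K lie in the span of the generators' images
  have habmem : ∀ (x : FreeGroup α) (h : x ∈ K),
      (ab ⟨x, h⟩).toAdd ∈ Submodule.span ℤ (Set.range q) := by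
    intro x hx
    have hx' : x ∈ Subgroup.closure ((S : Set (FreeGroup α)) ∪ {g}) := hKU ▸ hx
    refine Subgroup.closure_induction
      (p := fun y _ => ∀ h : y ∈ K, (ab ⟨y, h⟩).toAdd ∈ Submodule.span ℤ (Set.range q))
      ?_ ?_ ?_ ?_ hx' hx
    · rintro y (hy | hy) h
      · exact Submodule.subset_span ⟨some ⟨y, hy⟩, rfl⟩
      · rcases hy with rfl
        exact Submodule.subset_span ⟨none, rfl⟩
    · intro h
      have h1 : (⟨(1 : FreeGroup α), h⟩ : ↥K) = 1 := rfl
      rw [h1, map_one]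
      exact Submodule.zero_mem _
    · intro y z hy hz py pz h
      have hyK : y ∈ K := hKU.symm ▸ hy
      have hzK : z ∈ K := hKU.symm ▸ hz
      have hmul : (⟨y * z, h⟩ : ↥K) = ⟨y, hyK⟩ * ⟨z, hzK⟩ := rfl
      rw [hmul, map_mul, toAdd_mul]
      exact Submodule.add_mem _ (py hyK) (pz hzK)
    · intro y hy py h
      have hyK : y ∈ K := hKU.symm ▸ hy
      have hinv : (⟨y⁻¹, h⟩ : ↥K) = (⟨y, hyK⟩)⁻¹ := rfl
      rw [hinv, map_inv, toAdd_inv]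
      exact Submodule.neg_mem _ (py hyK)
  -- hence u is surjective
  have hspan : Submodule.span ℤ (Set.range q) = ⊤ := by
    rw [eq_top_iff, ← (Finsupp.basisSingleOne (R := ℤ) (ι := β)).span_eq, Submodule.span_le]
    rintro _ ⟨b, rfl⟩
    have hb : (ab (e.symm (FreeGroup.of b))).toAdd = Finsupp.single b 1 := by
      simp [hab, hπ]
    simpa [Finsupp.basisSingleOne, hb] using habmem _ (e.symm (FreeGroup.of b)).2
  have husurj : Surjective u := by
    rw [← LinearMap.range_eq_top, hu, Finsupp.range_linearCombination, hspan]
  -- so the free group K has finite rank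
  have : Module.Finite ℤ (β →₀ ℤ) := Module.Finite.of_surjective u husurj
  have hfinβ : Finite β := Module.Finite.finite_basis (Finsupp.basisSingleOne (R := ℤ))
  have : Fintype β := Fintype.ofFinite β
  by_cases hcard : Fintype.card β ≤ S.card
  · -- the basis of K gives a small generating set
    refine ⟨Finset.univ.image
        (fun b : β => ((e.symm (FreeGroup.of b) : ↥K) : FreeGroup α)), ?_, ?_⟩
    · have hgen : Subgroup.closure
          (Set.range (fun b : β => e.symm (FreeGroup.of b))) = (⊤ : Subgroup ↥K) := by
        have hcomp : (Set.range fun b : β => e.symm (FreeGroup.of b)) =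
            ⇑e.symm.toMonoidHom '' Set.range (FreeGroup.of) := by
          rw [← Set.range_comp]; rfl
        rw [hcomp, ← MonoidHom.map_closure, FreeGroup.closure_range_of]
        exact Subgroup.map_top_of_surjective _ e.symm.surjective
      have himg : ((Finset.univ.image
          (fun b : β => ((e.symm (FreeGroup.of b) : ↥K) : FreeGroup α)) : Finset (FreeGroup α))
            : Set (FreeGroup α)) =
          ⇑K.subtype '' (Set.range fun b : β => e.symm (FreeGroup.of b)) := by
        ext x
        simp [Subgroup.coe_subtype]
      rw [himg, ← MonoidHom.map_closure, hgen, ← MonoidHom.range_eq_map,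
        Subgroup.range_subtype]
    · exact (Finset.card_image_le.trans (by simpa using hcard))
  · -- impossible: rank considerations give a retraction killing S and sending g to 1
    exfalso
    push_neg at hcard
    have hcards : Fintype.card (Option {x : FreeGroup α // x ∈ S}) = Fintype.card β := by
      have h1 := u.rank_le_of_surjective husurj
      rw [rank_finsupp_self, rank_finsupp_self, Cardinal.mk_fintype, Cardinal.mk_fintype,
        Cardinal.lift_natCast, Cardinal.lift_natCast, Nat.cast_le] at h1
      simp only [Fintype.card_option, Fintype.card_coe] at h1 ⊢
      omega
    -- u is a linear equivalence
    have hinj : Injective u :=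
      OrzechProperty.injective_of_surjective_of_injective
        (Finsupp.domLCongr (R := ℤ) (M := ℤ) (Fintype.equivOfCardEq hcards)).toLinearMap
        u (Finsupp.domLCongr (Fintype.equivOfCardEq hcards)).injective husurj
    set uE := LinearEquiv.ofBijective u ⟨hinj, husurj⟩ with huE
    set ψ : (β →₀ ℤ) →ₗ[ℤ] ℤ :=
      (Finsupp.lapply none) ∘ₗ uE.symm.toLinearMap with hψdef
    have hψ : ∀ j, ψ (q j) = if j = none then 1 else 0 := by
      intro j
      have h1 : uE (Finsupp.single j 1) = q j := by
        simp [huE, hu, Finsupp.linearCombination_single]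
      have h2 : uE.symm (q j) = Finsupp.single j 1 := by
        rw [← h1, LinearEquiv.symm_apply_apply]
      rw [hψdef]
      simp only [LinearMap.coe_comp, Function.comp_apply, LinearEquiv.coe_coe, h2,
        Finsupp.lapply_apply]
      by_cases hj : j = none <;> simp [hj, Finsupp.single_apply]
    -- ψ ∘ ab kills the closure of S
    have hkill : ∀ (x : FreeGroup α) (hx : x ∈ Subgroup.closure (S : Set (FreeGroup α))),
        ∀ h : x ∈ K, ψ ((ab ⟨x, h⟩).toAdd) = 0 := by
      intro x hx
      refine Subgroup.closure_induction
        (p := fun y _ => ∀ h : y ∈ K, ψ ((ab ⟨y, h⟩).toAdd) = 0) ?_ ?_ ?_ ?_ hx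
      · intro y hy h
        have : (ab ⟨y, h⟩).toAdd = q (some ⟨y, hy⟩) := rfl
        rw [this, hψ]
        simp
      · intro h
        have h1 : (⟨(1 : FreeGroup α), h⟩ : ↥K) = 1 := rfl
        rw [h1, map_one]
        simpa using map_zero ψ
      · intro y z hy hz py pz h
        have hyK : y ∈ K := hSK hy
        have hzK : z ∈ K := hSK hz
        have hmul : (⟨y * z, h⟩ : ↥K) = ⟨y, hyK⟩ * ⟨z, hzK⟩ := rfl
        rw [hmul, map_mul, toAdd_mul, map_add, py hyK, pz hzK, add_zero]
      · intro y hy py h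
        have hyK : y ∈ K := hSK hy
        have hinv : (⟨y⁻¹, h⟩ : ↥K) = (⟨y, hyK⟩)⁻¹ := rfl
        rw [hinv, map_inv, toAdd_inv, map_neg, py hyK, neg_zero]
    -- but ψ(ab(g^m)) = m
    have hpow : (⟨g ^ m, hSK hgm⟩ : ↥K) = (⟨g, hgK⟩ : ↥K) ^ m := by
      ext; simp
    have h1 : ψ ((ab ⟨g ^ m, hSK hgm⟩).toAdd) = m := by
      rw [hpow, map_pow]
      have : ((ab ⟨g, hgK⟩ ^ m).toAdd) = m • (ab ⟨g, hgK⟩).toAdd := rfl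
      rw [this, map_nsmul]
      have : (ab ⟨g, hgK⟩).toAdd = q none := rfl
      rw [this, hψ]
      simp
    have h2 := hkill _ hgm (hSK hgm)
    rw [h1] at h2
    exact hm.ne' (by exact_mod_cast h2)

theorem iterated_rank_le {α : Type*} (H : Subgroup (FreeGroup α))
    [Group.FG H] (n : ℕ) (hn : Group.rank H = n) (k : ℕ)
    (f : Fin k → FreeGroup α) (m : Fin k → ℕ)
    (Hc : Fin (k + 1) → Subgroup (FreeGroup α))
    (h0 : Hc 0 = H)
    (hstep : ∀ j : Fin k, Hc j.succ = Hc j.castSucc ⊔ Subgroup.closure {f j})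
    (hf : ∀ j, f j ≠ 1) (hm : ∀ j, 0 < m j)
    (hroot : ∀ j : Fin k, f j ^ m j ∈ Hc j.castSucc)
    [Group.FG (Hc (Fin.last k))] :
    Group.rank (Hc (Fin.last k)) ≤ n := by
  classical
  obtain ⟨S0, hS0card, hS0top⟩ := Group.rank_spec ↥H
  have claim : ∀ j : Fin (k + 1), ∃ T : Finset (FreeGroup α),
      Subgroup.closure (T : Set (FreeGroup α)) = Hc j ∧ T.card ≤ n := by
    intro j
    induction j using Fin.induction with
    | zero =>
      refine ⟨S0.image ((↑) : ↥H → FreeGroup α), ?_, ?_⟩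
      · rw [h0, Finset.coe_image]
        have himg : (((↑) : ↥H → FreeGroup α) '' (S0 : Set ↥H)) =
            ⇑H.subtype '' (S0 : Set ↥H) := rfl
        rw [himg, ← MonoidHom.map_closure, hS0top, ← MonoidHom.range_eq_map,
          Subgroup.range_subtype]
      · exact Finset.card_image_le.trans (by rw [hS0card, hn])
    | succ j ih =>
      obtain ⟨T, hT, hTcard⟩ := ih
      obtain ⟨T', hT', hT'card⟩ :=
        key_step T (f j) (m j) (hm j) (by rw [hT]; exact hroot j)
      exact ⟨T', by rw [hT', hT, ← hstep j], hT'card.trans hTcard⟩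
  obtain ⟨T, hT, hTcard⟩ := claim (Fin.last k)
  have hle := Subgroup.rank_closure_finset_le_card T
  rw [Subgroup.rank_congr hT] at hle
  exact hle.trans hTcard
end
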